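/- Let w be a finite word whose longest proper palindromic suffix v satisfies w = zv with z nonempty, and suppose w is rich. Then the proper palindromic closure zv(reverse of z) is rich. -/

import Mathlib

open List

variable {A : Type*}

/-- All factors (contiguous subwords) of a word, as a list. -/
def Factors (w : List A) : List (List A) := w.tails.flatMap List.inits

/-- The set of distinct palindromic factors of `w` (including the empty word). -/
def palFactors [DecidableEq A] (w : List A) : Finset (List A) :=
  ((Factors w).filter (fun u => decide (u.reverse = u))).toFinset

/-- A word is rich if it has exactly `|w| + 1` distinct palindromic factors. -/
def IsRich [DecidableEq A] (w : List A) : Prop :=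
  (palFactors w).card = w.length + 1

/-- The defect of a finite word. -/
def defect [DecidableEq A] (w : List A) : ℕ :=
  w.length + 1 - (palFactors w).card

/-- `u` is a (finite) factor of the infinite word `z`. -/
def FactorOfInf (u : List A) (z : ℕ → A) : Prop :=
  ∃ i, u = (List.range u.length).map (fun k => z (i + k))

/-- An infinite word is rich if all of its finite factors are rich. -/
def InfRich [DecidableEq A] (z : ℕ → A) : Prop :=
  ∀ u : List A, FactorOfInf u z → IsRich u

/-- The longest palindromic suffix of `w`. -/
def lps [DecidableEq A] (w : List A) : List A :=
  (w.tails.find? (fun u => decide (u.reverse = u))).getD []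

/-- The number of occurrences of `u` as a factor of `w` (counted by position). -/
def occCount [DecidableEq A] (u w : List A) : ℕ :=
  w.tails.countP (fun t => decide (u <+: t))

/-- The periodic infinite word `u^∞`. -/
def periodicWord (u : List A) (hu : u ≠ []) : ℕ → A :=
  fun i => u.get ⟨i % u.length, Nat.mod_lt _ (List.length_pos_iff.mpr hu)⟩

lemma mem_Factors {u w : List A} : u ∈ Factors w ↔ u <:+: w := by
  simp only [Factors, List.mem_flatMap, List.mem_tails, List.mem_inits,
    List.infix_iff_prefix_suffix]
  tauto

lemma mem_palFactors [DecidableEq A] {u w : List A} :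
    u ∈ palFactors w ↔ u <:+: w ∧ u.reverse = u := by
  simp [palFactors, List.mem_filter, mem_Factors, and_comm]

lemma palFactors_mono [DecidableEq A] {w w' : List A} (h : w <:+: w') :
    palFactors w ⊆ palFactors w' := by
  intro u hu
  rw [mem_palFactors] at hu ⊢
  exact ⟨hu.1.trans h, hu.2⟩

lemma eq_of_suffix_length_eq {x y w : List A} (hx : x <:+ w) (hy : y <:+ w)
    (h : x.length = y.length) : x = y := by
  have h1 := List.suffix_of_suffix_length_le hx hy h.le
  exact List.IsSuffix.eq_of_length h1 h

lemma pal_suffix_prefix {x y : List A} (hx : x <:+ y) (hxp : x.reverse = x)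
    (hyp : y.reverse = y) : x <+: y := by
  have := List.reverse_prefix.mpr hx
  rwa [hxp, hyp] at this


lemma exists_maxpal [DecidableEq A] (w : List A) :
    ∃ P, P <:+ w ∧ P.reverse = P ∧ ∀ q, q <:+ w → q.reverse = q → q.length ≤ P.length := by
  set S : Finset (List A) := (w.tails.filter (fun u => decide (u.reverse = u))).toFinset with hS
  have hne : S.Nonempty := ⟨[], by simp [hS, List.mem_filter]⟩
  obtain ⟨P, hP, hmax⟩ := S.exists_max_image (fun u => u.length) hne
  simp only [hS, List.mem_toFinset, List.mem_filter, List.mem_tails, decide_eq_true_eq] at hP hmax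
  exact ⟨P, hP.1, hP.2, fun q h1 h2 => hmax q ⟨h1, h2⟩⟩

lemma infix_split {x u s t : List A} {a : A} (h : u ++ [a] = s ++ x ++ t)
    (ht : t ≠ []) : x <:+: u := by
  rcases List.eq_nil_or_concat t with rfl | ⟨t', b, rfl⟩
  · exact absurd rfl ht
  · have : u = s ++ x ++ t' := by
      have h2 : u ++ [a] = (s ++ x ++ t') ++ [b] := by
        simpa [List.concat_eq_append, List.append_assoc] using h
      have := congrArg List.dropLast h2
      simpa [List.dropLast_concat] using this
    exact ⟨s, t', by simp [this]⟩

lemma infix_concat' {x u : List A} {a : A} (h : x <:+: u ++ [a]) :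
    x <:+ u ++ [a] ∨ x <:+: u := by
  obtain ⟨s, t, hst⟩ := h
  rcases eq_or_ne t [] with rfl | ht
  · exact Or.inl ⟨s, by simpa using hst⟩
  · exact Or.inr (infix_split hst.symm ht)

-- a palindromic suffix shorter than another palindromic suffix is an inner factor
lemma pal_suffix_inner [DecidableEq A] {x P u : List A} {a : A}
    (hx : x <:+ u ++ [a]) (hxp : x.reverse = x) (hP : P <:+ u ++ [a])
    (hPp : P.reverse = P) (hlt : x.length < P.length) : x ∈ palFactors u := by
  have hxP : x <:+ P := List.suffix_of_suffix_length_le hx hP hlt.le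
  have hpre : x <+: P := pal_suffix_prefix hxP hxp hPp
  obtain ⟨d, hd⟩ := hpre
  obtain ⟨s, hs⟩ := hP
  have hd0 : d ≠ [] := by
    intro h; rw [h, List.append_nil] at hd; rw [hd] at hlt; omega
  rw [mem_palFactors]
  refine ⟨infix_split (a := a) (s := s) (t := d) ?_ hd0, hxp⟩
  rw [List.append_assoc, hd, hs]

lemma card_concat_le [DecidableEq A] (u : List A) (a : A) :
    (palFactors (u ++ [a])).card ≤ (palFactors u).card + 1 := by
  obtain ⟨P, hP, hPp, hmax⟩ := exists_maxpal (u ++ [a])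
  have hsub : palFactors (u ++ [a]) ⊆ insert P (palFactors u) := by
    intro x hx
    rw [mem_palFactors] at hx
    rcases infix_concat' hx.1 with hsuf | hinf
    · rcases lt_or_eq_of_le (hmax x hsuf hx.2) with hlt | heq
      · exact Finset.mem_insert_of_mem (pal_suffix_inner hsuf hx.2 hP hPp hlt)
      · exact Finset.mem_insert.mpr (Or.inl (eq_of_suffix_length_eq hsuf hP heq))
    · exact Finset.mem_insert_of_mem (by rw [mem_palFactors]; exact ⟨hinf, hx.2⟩)
  calc (palFactors (u ++ [a])).card ≤ (insert P (palFactors u)).card :=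
        Finset.card_le_card hsub
    _ ≤ (palFactors u).card + 1 := Finset.card_insert_le _ _

lemma card_palFactors_le [DecidableEq A] (u : List A) :
    (palFactors u).card ≤ u.length + 1 := by
  induction u using List.reverseRecOn with
  | nil =>
    have : palFactors ([] : List A) ⊆ {[]} := by
      intro x hx; rw [mem_palFactors] at hx
      simpa using List.infix_nil.mp hx.1
    simpa using (Finset.card_le_card this).trans (by simp)
  | append_singleton u a ih =>
    calc (palFactors (u ++ [a])).card ≤ (palFactors u).card + 1 := card_concat_le u a
      _ ≤ u.length + 1 + 1 := by omega
      _ = (u ++ [a]).length + 1 := by simp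

lemma rich_drop_last [DecidableEq A] {u : List A} {a : A} (h : IsRich (u ++ [a])) :
    IsRich u := by
  unfold IsRich at *
  have h1 := card_concat_le u a
  have h2 := card_palFactors_le u
  have h3 : (palFactors u).card ≤ (palFactors (u ++ [a])).card :=
    Finset.card_le_card (palFactors_mono ⟨[], [a], by simp⟩)
  simp only [List.length_append, List.length_singleton] at h
  omega

lemma rich_prefix [DecidableEq A] {p w : List A} (h : IsRich w) (hp : p <+: w) :
    IsRich p := by
  obtain ⟨t, rfl⟩ := hp
  induction t using List.reverseRecOn with
  | nil => simpa using h
  | append_singleton t a ih =>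
    exact ih (rich_drop_last (by rwa [← List.append_assoc] at h))

lemma palFactors_reverse [DecidableEq A] (w : List A) :
    palFactors w.reverse = palFactors w := by
  ext u
  rw [mem_palFactors, mem_palFactors]
  constructor
  · rintro ⟨h1, h2⟩
    refine ⟨?_, h2⟩
    have := List.reverse_infix.mpr h1
    rwa [h2, List.reverse_reverse] at this
  · rintro ⟨h1, h2⟩
    refine ⟨?_, h2⟩
    have : u.reverse <:+: w.reverse := List.reverse_infix.mpr h1
    rwa [h2] at this

lemma rich_reverse [DecidableEq A] {w : List A} (h : IsRich w) : IsRich w.reverse := by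
  unfold IsRich at *
  rw [palFactors_reverse, List.length_reverse]
  exact h

lemma rich_suffix [DecidableEq A] {s w : List A} (h : IsRich w) (hs : s <:+ w) :
    IsRich s := by
  have h1 : s.reverse <+: w.reverse := List.reverse_prefix.mpr hs
  have := rich_reverse (rich_prefix (rich_reverse h) h1)
  simpa using this

/-- the key "new palindrome" lemma: in a rich word `u ++ [a]`, the longest palindromic
suffix does not occur as a factor of `u`. -/
lemma newpal [DecidableEq A] {u P : List A} {a : A} (h : IsRich (u ++ [a]))
    (hP : P <:+ u ++ [a]) (hPp : P.reverse = P)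
    (hmaxP : ∀ q, q <:+ u ++ [a] → q.reverse = q → q.length ≤ P.length) :
    P ∉ palFactors u := by
  intro hPin
  -- then palFactors (u ++ [a]) ⊆ palFactors u, contradicting cardinalities
  have hsub : palFactors (u ++ [a]) ⊆ palFactors u := by
    intro x hx
    rw [mem_palFactors] at hx
    rcases infix_concat' hx.1 with hsuf | hinf
    · rcases lt_or_eq_of_le (hmaxP x hsuf hx.2) with hlt | heq
      · exact pal_suffix_inner hsuf hx.2 hP hPp hlt
      · rwa [eq_of_suffix_length_eq hsuf hP heq]
    · exact mem_palFactors.mpr ⟨hinf, hx.2⟩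
  have h1 := Finset.card_le_card hsub
  have h2 := card_palFactors_le u
  unfold IsRich at h
  simp only [List.length_append, List.length_singleton] at h
  omega

lemma newpal' [DecidableEq A] {w P : List A} (h : IsRich w) (hw : w ≠ [])
    (hP : P <:+ w) (hPp : P.reverse = P)
    (hmaxP : ∀ q, q <:+ w → q.reverse = q → q.length ≤ P.length) :
    ∀ s t : List A, w = s ++ P ++ t → t = [] := by
  rcases List.eq_nil_or_concat w with rfl | ⟨u, a, rfl⟩
  · exact absurd rfl hw
  · intro s t hst
    by_contra ht
    rw [List.concat_eq_append] at *
    have h1 : P <:+: u := infix_split hst ht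
    exact newpal h hP hPp hmaxP (mem_palFactors.mpr ⟨h1, hPp⟩)

lemma exists_maxpal_pref [DecidableEq A] (r : List A) :
    ∃ Q, Q <+: r ∧ Q.reverse = Q ∧ ∀ q, q <+: r → q.reverse = q → q.length ≤ Q.length := by
  obtain ⟨P, hP, hPp, hmax⟩ := exists_maxpal r.reverse
  refine ⟨P, ?_, hPp, fun q hq hqp => ?_⟩
  · have : P.reverse <+: r.reverse.reverse := List.reverse_prefix.mpr hP
    rwa [hPp, List.reverse_reverse] at this
  · have h1 : q.reverse <:+ r.reverse := by
      rw [List.reverse_suffix]; exact hq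
    rw [hqp] at h1
    simpa using hmax q h1 hqp

lemma newpal_pref [DecidableEq A] {r Q : List A} (h : IsRich r) (hr : r ≠ [])
    (hQ : Q <+: r) (hQp : Q.reverse = Q)
    (hmaxQ : ∀ q, q <+: r → q.reverse = q → q.length ≤ Q.length) :
    ∀ s t : List A, r = s ++ Q ++ t → s = [] := by
  intro s t hst
  have hrev : r.reverse = t.reverse ++ Q ++ s.reverse := by
    rw [hst]; simp [hQp, List.reverse_append, List.append_assoc]
  have hPrev : Q <:+ r.reverse := by
    have : Q.reverse <:+ r.reverse := List.reverse_suffix.mpr hQ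
    rwa [hQp] at this
  have hmax' : ∀ q, q <:+ r.reverse → q.reverse = q → q.length ≤ Q.length := by
    intro q hq hqp
    have h1 : q.reverse <+: r.reverse.reverse := List.reverse_prefix.mpr hq
    rw [List.reverse_reverse] at h1
    rw [hqp] at h1
    exact hmaxQ q h1 hqp
  have := newpal' (rich_reverse h) (by simpa using hr) hPrev hQp hmax' _ _ hrev
  simpa using this

lemma eq_of_prefix_length_eq {x y w : List A} (hx : x <+: w) (hy : y <+: w)
    (h : x.length = y.length) : x = y :=
  (List.prefix_of_prefix_length_le hx hy h.le).eq_of_length h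

/-- Key lemma: occurrences of `v` in `w` are only the prefix or suffix occurrence. -/
lemma lemmaV [DecidableEq A] {w z v : List A} (hzv : w = z ++ v) (hz : z ≠ [])
    (hv : v.reverse = v)
    (hmax : ∀ s : List A, s <:+ w → s.reverse = s → s.length < w.length →
      s.length ≤ v.length)
    (hrich : IsRich w) :
    ∀ s t : List A, w = s ++ v ++ t → s = [] ∨ t = [] := by
  by_contra hcon
  push_neg at hcon
  obtain ⟨s1, t1, hst1, hs1, ht1⟩ := hcon
  -- pick an occurrence with t ≠ [] minimizing t.length
  have hex : ∃ m : ℕ, ∃ s t : List A, w = s ++ v ++ t ∧ t ≠ [] ∧ t.length = m :=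
    ⟨t1.length, s1, t1, hst1, ht1, rfl⟩
  classical
  obtain ⟨s0, t0, hst0, ht0, hlen0⟩ := Nat.find_spec hex
  set m0 := Nat.find hex with hm0
  have hmin : ∀ s t : List A, w = s ++ v ++ t → t ≠ [] → m0 ≤ t.length := by
    intro s t hw ht
    exact Nat.find_min' hex ⟨s, t, hw, ht, rfl⟩
  have hs0 : s0 ≠ [] := by
    intro hs0nil
    have h1 : m0 ≤ t1.length := hmin s1 t1 hst1 ht1
    have h2 : s1.length + v.length + t1.length = w.length := by
      rw [hst1]; simp only [List.length_append]
    have h3 : s0.length + v.length + t0.length = w.length := by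
      rw [hst0]; simp only [List.length_append]
    have : s1.length ≥ 1 := List.length_pos_iff.mpr hs1
    rw [hs0nil] at h3
    simp at h3
    omega
  -- r is the suffix of w starting at the occurrence of v
  set r := v ++ t0 with hrdef
  have hr_suf : r <:+ w := ⟨s0, by rw [hst0, List.append_assoc]⟩
  have hr_rich : IsRich r := rich_suffix hrich hr_suf
  have hr_ne : r ≠ [] := by
    intro h; rw [hrdef] at h; exact ht0 (List.append_eq_nil_iff.mp h).2
  have hr_lt : r.length < w.length := by
    have : s0.length + r.length = w.length := by
      rw [hst0]; simp [hrdef]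
    have := List.length_pos_iff.mpr hs0
    omega
  have hv_len_lt : v.length < r.length := by
    have := List.length_pos_iff.mpr ht0
    simp [hrdef]; omega
  obtain ⟨Q, hQ, hQp, hQmax⟩ := exists_maxpal_pref r
  have hvQ : v.length ≤ Q.length := hQmax v ⟨t0, rfl⟩ hv
  rcases lt_or_eq_of_le (List.IsPrefix.length_le hQ) with hQlt | hQeq
  · rcases lt_or_eq_of_le hvQ with hvQlt | hvQeq
    · -- v.length < Q.length < r.length : find a closer occurrence of v
      have hvQpre : v <+: Q := List.prefix_of_prefix_length_le ⟨t0, rfl⟩ hQ hvQlt.le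
      have hvQsuf : v <:+ Q := by
        have := List.reverse_suffix.mpr hvQpre
        rwa [hv, hQp] at this
      obtain ⟨c, hc⟩ := hvQsuf
      obtain ⟨d, hd⟩ := hQ
      have hd_ne : d ≠ [] := by
        intro h; rw [h, List.append_nil] at hd; rw [hd] at hQlt; omega
      have hnewocc : w = (s0 ++ c) ++ v ++ d := by
        have h5 : v ++ t0 = c ++ v ++ d := by
          rw [hc, hd]
        rw [hst0]
        simp only [List.append_assoc, h5]
      have h1 := hmin _ _ hnewocc hd_ne
      have h2 : d.length < t0.length := by
        have hdl : Q.length + d.length = r.length := by rw [← hd]; simp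
        simp [hrdef] at hdl ⊢
        omega
      omega
    · -- Q.length = v.length: Q = v, and v occurs as a proper suffix of r: contra newpal_pref
      have hQv : Q = v := eq_of_prefix_length_eq hQ ⟨t0, rfl⟩ hvQeq.symm
      have hvr : v <:+ r := by
        have hvw : v <:+ w := ⟨z, hzv.symm⟩
        exact List.suffix_of_suffix_length_le hvw hr_suf hv_len_lt.le
      obtain ⟨c, hc⟩ := hvr
      have hc_ne : c ≠ [] := by
        intro h; rw [h] at hc; simp at hc
        rw [← hc] at hv_len_lt; omega
      have := newpal_pref hr_rich hr_ne hQ hQp hQmax c [] (by rw [hQv]; simp [← hc])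
      exact hc_ne this
  · -- Q = r: r is a proper palindromic suffix longer than v
    have hQr : Q = r := hQ.eq_of_length hQeq
    have : r.length ≤ v.length := hmax r hr_suf (by rw [← hQr, hQp, hQr]) hr_lt
    omega

lemma closure_step [DecidableEq A] {W P : List A} {b : A}
    (hrichW : IsRich W)
    (hocc : ∀ s t : List A, W = s ++ P ++ t → s = [] ∨ t = [])
    (hPsuf : ([b] ++ P ++ [b]) <:+ W ++ [b])
    (hppal : ([b] ++ P ++ [b]).reverse = [b] ++ P ++ [b]) :
    IsRich (W ++ [b]) ∧
      ∀ s t : List A, W ++ [b] = s ++ ([b] ++ P ++ [b]) ++ t → s = [] ∨ t = [] := by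
  set P' := [b] ++ P ++ [b] with hP'
  have hnot : ∀ s t : List A, W = s ++ P' ++ t → False := by
    intro s t h
    have h2 : W = (s ++ [b]) ++ P ++ ([b] ++ t) := by
      rw [h, hP']; simp [List.append_assoc]
    rcases hocc _ _ h2 with h' | h' <;> simp at h'
  have hnotmem : P' ∉ palFactors W := by
    intro hm
    obtain ⟨s, t, hst⟩ := (mem_palFactors.mp hm).1
    exact hnot s t hst.symm
  have hmem : P' ∈ palFactors (W ++ [b]) := mem_palFactors.mpr ⟨hPsuf.isInfix, hppal⟩
  constructor
  · have h1 : insert P' (palFactors W) ⊆ palFactors (W ++ [b]) :=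
      Finset.insert_subset hmem (palFactors_mono ⟨[], [b], by simp⟩)
    have h2 := Finset.card_le_card h1
    rw [Finset.card_insert_of_notMem hnotmem] at h2
    have h3 := card_palFactors_le (W ++ [b])
    unfold IsRich at *
    simp only [List.length_append, List.length_singleton] at *
    omega
  · intro s t h
    rcases eq_or_ne t [] with rfl | ht
    · exact Or.inr rfl
    · exact absurd (by
        obtain ⟨s', t', hst⟩ := infix_split h ht
        exact hnot s' t' hst.symm) id

theorem proper_palindromic_closure_rich [DecidableEq A] (w z v : List A)
    (hzv : w = z ++ v) (hz : z ≠ []) (hv : v.reverse = v)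
    (hmax : ∀ s : List A, s <:+ w → s.reverse = s → s.length < w.length →
      s.length ≤ v.length)
    (hrich : IsRich w) :
    IsRich (z ++ v ++ z.reverse) := by
  have key : ∀ k, k ≤ z.length →
      IsRich (z ++ v ++ (z.drop (z.length - k)).reverse) ∧
      ∀ s t : List A, z ++ v ++ (z.drop (z.length - k)).reverse =
          s ++ ((z.drop (z.length - k)) ++ v ++ (z.drop (z.length - k)).reverse) ++ t →
          s = [] ∨ t = [] := by
    intro k
    induction k with
    | zero =>
      intro _
      simp only [Nat.sub_zero, List.drop_length, List.reverse_nil, List.append_nil,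
        List.nil_append]
      refine ⟨by rw [← hzv]; exact hrich, ?_⟩
      intro s t h
      exact lemmaV hzv hz hv hmax hrich s t (by rw [hzv]; exact h)
    | succ k ih =>
      intro hk1
      obtain ⟨ihr, ihocc⟩ := ih (by omega)
      set m := z.length - (k + 1) with hm
      have hmlt : m < z.length := by omega
      have hmk : z.length - k = m + 1 := by omega
      rw [hmk] at ihr ihocc
      have hdrop : z.drop m = z[m] :: z.drop (m + 1) := List.drop_eq_getElem_cons hmlt
      set b := z[m] with hb
      set d' := z.drop (m + 1) with hd'
      -- the new word and new palindrome
      have hW : z ++ v ++ (z.drop m).reverse = (z ++ v ++ d'.reverse) ++ [b] := by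
        rw [hdrop]; simp [List.append_assoc]
      have hp : z.drop m ++ v ++ (z.drop m).reverse
          = [b] ++ (d' ++ v ++ d'.reverse) ++ [b] := by
        rw [hdrop]; simp [List.append_assoc]
      have hPsuf : ([b] ++ (d' ++ v ++ d'.reverse) ++ [b]) <:+ (z ++ v ++ d'.reverse) ++ [b] := by
        refine ⟨z.take m, ?_⟩
        rw [← hp, ← hW]
        simp only [← List.append_assoc, List.take_append_drop]
      have hppal : ([b] ++ (d' ++ v ++ d'.reverse) ++ [b]).reverse
          = [b] ++ (d' ++ v ++ d'.reverse) ++ [b] := by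
        simp [List.reverse_append, hv]
      obtain ⟨hr, ho⟩ := closure_step ihr ihocc hPsuf hppal
      rw [hW, hp]
      exact ⟨hr, ho⟩
  have := (key z.length le_rfl).1
  simpa [Nat.sub_self] using this
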